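/- For all z, w in the hyperbolic upper half-plane ℍ there exists an integer k such that d(z, w + 2πk) ≤ |log(Im z) − log(Im w)| + 2π / max(Im z, Im w). -/

import Mathlib

open UpperHalfPlane

/-- For all `z, w` in the hyperbolic upper half-plane `ℍ` there exists an
integer `k` such that
`d(z, w + 2πk) ≤ |log(Im z) − log(Im w)| + 2π / max(Im z, Im w)`. -/
theorem exists_deck_translate_dist_le (z w : UpperHalfPlane) :
    ∃ k : ℤ, dist z ((2 * Real.pi * (k : ℝ)) +ᵥ w) ≤
      |Real.log z.im - Real.log w.im| + 2 * Real.pi / max z.im w.im := by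
  have hpi : (0:ℝ) < Real.pi := Real.pi_pos
  set k : ℤ := round ((z.re - w.re) / (2 * Real.pi)) with hk
  refine ⟨k, ?_⟩
  set m : ℝ := max z.im w.im with hm
  have hz : 0 < z.im := z.im_pos
  have hw : 0 < w.im := w.im_pos
  have hm0 : 0 < m := lt_max_of_lt_left hz
  -- intermediate points
  set p1 : UpperHalfPlane := ⟨⟨z.re, m⟩, hm0⟩ with hp1
  set p2 : UpperHalfPlane := ⟨⟨2 * Real.pi * (k:ℝ) + w.re, m⟩, hm0⟩ with hp2
  have hre1 : z.re = p1.re := rfl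
  have d1 : dist z p1 = dist (Real.log z.im) (Real.log m) :=
    UpperHalfPlane.dist_of_re_eq hre1
  have hre2 : p2.re = ((2 * Real.pi * (k:ℝ)) +ᵥ w).re := by
    rw [UpperHalfPlane.vadd_re]; rfl
  have d3 : dist p2 ((2 * Real.pi * (k:ℝ)) +ᵥ w)
      = dist (Real.log m) (Real.log w.im) := by
    simpa [UpperHalfPlane.vadd_im, show p2.im = m from rfl] using UpperHalfPlane.dist_of_re_eq hre2
  -- horizontal bound
  have h2pi : (0:ℝ) < 2 * Real.pi := by linarith
  have habs : |z.re - w.re - 2 * Real.pi * (k:ℝ)| ≤ Real.pi := by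
    have h := abs_sub_round ((z.re - w.re) / (2 * Real.pi))
    have h3 : |z.re - w.re - 2 * Real.pi * (k:ℝ)|
        = |(z.re - w.re) / (2 * Real.pi) - (k:ℝ)| * (2 * Real.pi) := by
      rw [← abs_of_pos h2pi, ← abs_mul, abs_of_pos h2pi]
      congr 1
      field_simp
    rw [h3, ← hk] at *
    calc |(z.re - w.re) / (2 * Real.pi) - (k:ℝ)| * (2 * Real.pi)
        ≤ (1/2) * (2 * Real.pi) := mul_le_mul_of_nonneg_right h h2pi.le
      _ = Real.pi := by ring
  have d2 : dist p1 p2 ≤ Real.pi / m := by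
    have hd0 : dist (p1 : ℂ) (p2 : ℂ) = dist (p1 : ℂ).re (p2 : ℂ).re :=
      Complex.dist_of_im_eq rfl
    have hd : dist (p1 : ℂ) (p2 : ℂ) = |z.re - w.re - 2 * Real.pi * (k:ℝ)| := by
      rw [hd0]
      show dist z.re (2 * Real.pi * (k:ℝ) + w.re) = _
      rw [Real.dist_eq]
      congr 1
      ring
    calc dist p1 p2 ≤ dist (p1 : ℂ) (p2 : ℂ) / Real.sqrt (p1.im * p2.im) :=
          UpperHalfPlane.dist_le_dist_coe_div_sqrt p1 p2
      _ = |z.re - w.re - 2 * Real.pi * (k:ℝ)| / m := by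
          rw [hd]
          congr 1
          show Real.sqrt (m * m) = m
          rw [Real.sqrt_mul_self hm0.le]
      _ ≤ Real.pi / m := by gcongr
  -- combine
  have key : dist (Real.log z.im) (Real.log m) + dist (Real.log m) (Real.log w.im)
      = |Real.log z.im - Real.log w.im| := by
    rw [Real.dist_eq, Real.dist_eq]
    rcases le_total z.im w.im with h | h
    · rw [hm, max_eq_right h]; simp
    · rw [hm, max_eq_left h]; simp
  calc dist z ((2 * Real.pi * (k:ℝ)) +ᵥ w)
      ≤ dist z p1 + dist p1 p2 + dist p2 ((2 * Real.pi * (k:ℝ)) +ᵥ w) :=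
        dist_triangle4 _ _ _ _
    _ ≤ dist (Real.log z.im) (Real.log m) + Real.pi / m
        + dist (Real.log m) (Real.log w.im) := by rw [d1, d3]; linarith
    _ = |Real.log z.im - Real.log w.im| + Real.pi / m := by linarith [key]
    _ ≤ |Real.log z.im - Real.log w.im| + 2 * Real.pi / m := by
        have : Real.pi / m ≤ 2 * Real.pi / m := by gcongr; linarith
        linarith
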